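/- The average success probability of the randomized Grover strategy, ∫₀¹ sin²(π r √m / 2) dr, equals 1/2 − sin(π√m)/(2π√m), and for every positive integer m this quantity is at least 1/2 − sin(√6 π)/(2√6 π) ≈ 0.435; in particular it is bounded below by a positive constant independent of m. -/

import Mathlib

set_option maxHeartbeats 1000000

open Real

lemma grover_sqrt_le {x y : ℝ} (hy : 0 ≤ y) (h : x ≤ y ^ 2) : Real.sqrt x ≤ y := by
  calc Real.sqrt x ≤ Real.sqrt (y ^ 2) := Real.sqrt_le_sqrt h
    _ = y := Real.sqrt_sq hy

lemma grover_le_sqrt {x y : ℝ} (hy : 0 ≤ y) (h : y ^ 2 ≤ x) : y ≤ Real.sqrt x := by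
  nlinarith [Real.sqrt_nonneg x, Real.sq_sqrt (le_trans (by positivity) h : (0:ℝ) ≤ x)]

lemma grover_sin6 : (0.98 : ℝ) ≤ Real.sin (Real.sqrt 6 * Real.pi) := by
  have h6l : (2.449 : ℝ) ≤ Real.sqrt 6 := grover_le_sqrt (by norm_num) (by norm_num)
  have h6u : Real.sqrt 6 ≤ (2.4495 : ℝ) := grover_sqrt_le (by norm_num) (by norm_num)
  have hpil := Real.pi_gt_d2
  have hpiu := Real.pi_lt_d2
  have h1 : Real.sin (Real.sqrt 6 * Real.pi)
      = Real.sin (Real.sqrt 6 * Real.pi - 2 * Real.pi) := by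
    calc Real.sin (Real.sqrt 6 * Real.pi)
        = Real.sin ((Real.sqrt 6 * Real.pi - 2 * Real.pi) + 2 * Real.pi) := by congr 1; ring
      _ = _ := Real.sin_add_two_pi _
  set t : ℝ := Real.sqrt 6 * Real.pi - 2 * Real.pi with ht
  have h2 : Real.sin t = Real.cos (Real.pi / 2 - t) := (Real.cos_pi_div_two_sub t).symm
  have h3 : (1 : ℝ) - (Real.pi / 2 - t) ^ 2 / 2 ≤ Real.cos (Real.pi / 2 - t) :=
    Real.one_sub_sq_div_two_le_cos
  have hb : Real.pi / 2 - t = (2.5 - Real.sqrt 6) * Real.pi := by rw [ht]; ring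
  have hb1 : (0:ℝ) ≤ Real.pi / 2 - t := by rw [hb]; nlinarith
  have hb2 : Real.pi / 2 - t ≤ 0.161 := by rw [hb]; nlinarith
  rw [h1, h2]
  nlinarith [h3]

lemma grover_int (a : ℝ) (ha : 0 < a) :
    (∫ r in (0:ℝ)..1, Real.sin (Real.pi * r * a / 2) ^ 2)
      = 1 / 2 - Real.sin (Real.pi * a) / (2 * Real.pi * a) := by
  have hc : Real.pi * a / 2 ≠ 0 := by positivity
  have h1 : ∀ r : ℝ, Real.pi * r * a / 2 = (Real.pi * a / 2) * r := fun r => by ring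
  simp only [h1]
  rw [intervalIntegral.integral_comp_mul_left (fun x => Real.sin x ^ 2) hc]
  rw [mul_zero, mul_one, integral_sin_sq]
  have h2 : Real.sin (Real.pi * a)
      = 2 * Real.sin (Real.pi * a / 2) * Real.cos (Real.pi * a / 2) := by
    rw [← Real.sin_two_mul]; congr 1; ring
  rw [h2]
  have hpa : Real.pi * a ≠ 0 := by positivity
  have hpi0 := Real.pi_ne_zero; have ha0 := ha.ne'; simp only [Real.sin_zero, Real.cos_zero, mul_one, zero_sub, sub_zero, zero_add, add_zero]
  field_simp
  rw [smul_eq_mul]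
  field_simp
  ring

/-- The average success probability of the randomized Grover strategy,
`∫₀¹ sin²(π r √m / 2) dr`, equals `1/2 − sin(π√m)/(2π√m)`, and for every positive
integer `m` this quantity is at least `1/2 − sin(√6 π)/(2√6 π)`; in particular it is
bounded below by a positive constant independent of `m`. -/
theorem stmt6 (m : ℕ) (hm : 0 < m) :
    (∫ r in (0:ℝ)..1, Real.sin (Real.pi * r * Real.sqrt m / 2) ^ 2)
        = 1 / 2 - Real.sin (Real.pi * Real.sqrt m) / (2 * Real.pi * Real.sqrt m) ∧
    (1 / 2 - Real.sin (Real.sqrt 6 * Real.pi) / (2 * Real.sqrt 6 * Real.pi)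
        ≤ 1 / 2 - Real.sin (Real.pi * Real.sqrt m) / (2 * Real.pi * Real.sqrt m)) ∧
    (0 < 1 / 2 - Real.sin (Real.sqrt 6 * Real.pi) / (2 * Real.sqrt 6 * Real.pi)) := by
  have hpil := Real.pi_gt_d2
  have hpiu := Real.pi_lt_d2
  have hpi := Real.pi_pos
  have h6l : (2.449 : ℝ) ≤ Real.sqrt 6 := grover_le_sqrt (by norm_num) (by norm_num)
  have h6u : Real.sqrt 6 ≤ (2.4495 : ℝ) := grover_sqrt_le (by norm_num) (by norm_num)
  have hs6 := grover_sin6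
  have hden6 : (0:ℝ) < 2 * Real.sqrt 6 * Real.pi := by positivity
  have hrhs : (0:ℝ) ≤ Real.sin (Real.sqrt 6 * Real.pi) / (2 * Real.sqrt 6 * Real.pi) :=
    div_nonneg (by linarith) hden6.le
  have hm1 : (1:ℝ) ≤ (m:ℝ) := by exact_mod_cast hm
  have hml : (1:ℝ) ≤ Real.sqrt m := grover_le_sqrt (by norm_num) (by nlinarith)
  have hmp : (0:ℝ) < Real.sqrt m := lt_of_lt_of_le one_pos hml
  refine ⟨grover_int _ hmp, ?_, ?_⟩
  · -- main inequality
    have key : Real.sin (Real.pi * Real.sqrt m) / (2 * Real.pi * Real.sqrt m)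
        ≤ Real.sin (Real.sqrt 6 * Real.pi) / (2 * Real.sqrt 6 * Real.pi) := by
      rcases le_or_gt m 6 with h6 | h7
      · interval_cases m
        · -- m = 1
          rw [Nat.cast_one, Real.sqrt_one, mul_one, Real.sin_pi, zero_div]
          exact hrhs
        · -- m = 2
          have h1 : Real.sin (Real.pi * Real.sqrt 2) ≤ 0 := by
            have hu : Real.sqrt 2 ≤ 2 := grover_sqrt_le (by norm_num) (by norm_num)
            have hl : (1:ℝ) ≤ Real.sqrt 2 := grover_le_sqrt (by norm_num) (by norm_num)
            have := Real.sin_nonneg_of_nonneg_of_le_pi (x := Real.pi * Real.sqrt 2 - Real.pi)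
              (by nlinarith) (by nlinarith)
            rw [Real.sin_sub_pi] at this; linarith
          have h2 : Real.sin (Real.pi * Real.sqrt 2) / (2 * Real.pi * Real.sqrt 2) ≤ 0 :=
            div_nonpos_of_nonpos_of_nonneg h1 (by positivity)
          push_cast
          exact h2.trans hrhs
        · -- m = 3
          have h1 : Real.sin (Real.pi * Real.sqrt 3) ≤ 0 := by
            have hu : Real.sqrt 3 ≤ 2 := grover_sqrt_le (by norm_num) (by norm_num)
            have hl : (1:ℝ) ≤ Real.sqrt 3 := grover_le_sqrt (by norm_num) (by norm_num)
            have := Real.sin_nonneg_of_nonneg_of_le_pi (x := Real.pi * Real.sqrt 3 - Real.pi)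
              (by nlinarith) (by nlinarith)
            rw [Real.sin_sub_pi] at this; linarith
          have h2 : Real.sin (Real.pi * Real.sqrt 3) / (2 * Real.pi * Real.sqrt 3) ≤ 0 :=
            div_nonpos_of_nonpos_of_nonneg h1 (by positivity)
          push_cast
          exact h2.trans hrhs
        · -- m = 4
          have h4 : Real.sqrt ((4:ℕ):ℝ) = 2 := by
            rw [show ((4:ℕ):ℝ) = 2 ^ 2 by norm_num, Real.sqrt_sq (by norm_num)]
          rw [h4, show Real.pi * 2 = 2 * Real.pi by ring, Real.sin_two_pi, zero_div]
          exact hrhs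
        · -- m = 5
          have h5l : (2.236:ℝ) ≤ Real.sqrt 5 := grover_le_sqrt (by norm_num) (by norm_num)
          have h5u : Real.sqrt 5 ≤ (2.2361:ℝ) := grover_sqrt_le (by norm_num) (by norm_num)
          have hub : Real.sin (Real.pi * Real.sqrt 5) ≤ 0.75 := by
            have heq : Real.sin (Real.pi * Real.sqrt 5)
                = Real.sin (Real.pi * Real.sqrt 5 - 2 * Real.pi) := by
              calc Real.sin (Real.pi * Real.sqrt 5)
                  = Real.sin ((Real.pi * Real.sqrt 5 - 2 * Real.pi) + 2 * Real.pi) := by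
                    congr 1; ring
                _ = _ := Real.sin_add_two_pi _
            have := Real.sin_le (x := Real.pi * Real.sqrt 5 - 2 * Real.pi) (by nlinarith)
            rw [heq]; nlinarith
          have hmid : (1.5:ℝ) * Real.sqrt 6 ≤ 1.96 * Real.sqrt 5 := by nlinarith
          push_cast
          calc Real.sin (Real.pi * Real.sqrt 5) / (2 * Real.pi * Real.sqrt 5)
              ≤ 0.75 / (2 * Real.pi * Real.sqrt 5) :=
                div_le_div_of_nonneg_right hub (by positivity)
            _ ≤ 0.98 / (2 * Real.sqrt 6 * Real.pi) := by
                rw [div_le_div_iff₀ (by positivity) hden6]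
                nlinarith [mul_le_mul_of_nonneg_right hmid hpi.le]
            _ ≤ Real.sin (Real.sqrt 6 * Real.pi) / (2 * Real.sqrt 6 * Real.pi) :=
                div_le_div_of_nonneg_right hs6 hden6.le
        · -- m = 6
          push_cast
          rw [mul_comm Real.pi (Real.sqrt 6),
            show 2 * Real.pi * Real.sqrt 6 = 2 * Real.sqrt 6 * Real.pi by ring]
      · -- m ≥ 7
        have h7' : (7:ℝ) ≤ (m:ℝ) := by exact_mod_cast h7
        have hm7 : Real.sqrt 6 ≤ 0.98 * Real.sqrt m := by
          have h1 : Real.sqrt 7 ≤ Real.sqrt m := Real.sqrt_le_sqrt h7'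
          have h7l : (2.6457:ℝ) ≤ Real.sqrt 7 := grover_le_sqrt (by norm_num) (by norm_num)
          nlinarith
        calc Real.sin (Real.pi * Real.sqrt m) / (2 * Real.pi * Real.sqrt m)
            ≤ 1 / (2 * Real.pi * Real.sqrt m) :=
              div_le_div_of_nonneg_right (Real.sin_le_one _) (by positivity)
          _ ≤ 0.98 / (2 * Real.sqrt 6 * Real.pi) := by
              rw [div_le_div_iff₀ (by positivity) hden6]
              nlinarith [mul_le_mul_of_nonneg_right hm7 hpi.le]
          _ ≤ Real.sin (Real.sqrt 6 * Real.pi) / (2 * Real.sqrt 6 * Real.pi) :=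
              div_le_div_of_nonneg_right hs6 hden6.le
    linarith
  · -- positivity
    have h1 : Real.sin (Real.sqrt 6 * Real.pi) ≤ 1 := Real.sin_le_one _
    have h2 : Real.sin (Real.sqrt 6 * Real.pi) / (2 * Real.sqrt 6 * Real.pi)
        ≤ 1 / (2 * Real.sqrt 6 * Real.pi) :=
      div_le_div_of_nonneg_right h1 hden6.le
    have h3 : (1:ℝ) / (2 * Real.sqrt 6 * Real.pi) < 1 / 2 := by
      rw [div_lt_div_iff₀ hden6 (by norm_num : (0:ℝ) < 2)]
      nlinarith
    linarith
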